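/- arXiv:2109.13377 — 2 statements merged into one kernel-verified Lean document; each statement's English description precedes it below -/
import Mathlib

section
/- Under the iterate hypotheses, for every feasible occupancy measure q^f ∈ Δ with D(q^f) ≤ l, the averaged Lagrangian satisfies L(q̄, λ̃) ≤ C(q^f) + ε_ol + ε_est, where ε_est = (C̄ + B·D̄)·ε_oe and ε_ol = 2ε_br + 2ε_est + R/T. -/
/-- ℓ¹ norm Σ_{h,s,a} |·| on functions {0,…,H} × S × A → ℝ. -/
def l1norm {S A : Type*} [Fintype S] [Fintype A] (H : ℕ) (q : ℕ → S → A → ℝ) : ℝ :=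
  ∑ h ∈ Finset.range (H + 1), ∑ s : S, ∑ a : A, |q h s a|

/-- Weighted total cost Σ_{h,s,a} q_h(s,a) c_h(s,a). -/
def costVal {S A : Type*} [Fintype S] [Fintype A] (H : ℕ) (c q : ℕ → S → A → ℝ) : ℝ :=
  ∑ h ∈ Finset.range (H + 1), ∑ s : S, ∑ a : A, q h s a * c h s a

/-- Lagrangian L(q, λ) = C(q) + λ[1]·(D(q) − l). -/
def lagrangian {S A : Type*} [Fintype S] [Fintype A] (H : ℕ) (c d : ℕ → S → A → ℝ)
    (l : ℝ) (q : ℕ → S → A → ℝ) (lam : ℝ × ℝ) : ℝ :=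
  costVal H c q + lam.1 * (costVal H d q - l)

/-- q ∈ Δ: the linear constraints defining occupancy measures of the finite-horizon MDP
with horizon H, initial state s0 and transition kernel p (where `p h s a s'` is the
probability of moving to `s'` from `s` under `a` at step `h`). -/
def IsOccupancy {S A : Type*} [Fintype S] [Fintype A] [DecidableEq S] (H : ℕ) (s0 : S)
    (p : ℕ → S → A → S → ℝ) (q : ℕ → S → A → ℝ) : Prop :=
  (∀ h ≤ H, ∀ (s : S) (a : A), 0 ≤ q h s a) ∧
  (∀ s : S, ∑ a : A, q 0 s a = if s = s0 then 1 else 0) ∧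
  (∀ h < H, ∀ s : S, ∑ a : A, q (h + 1) s a = ∑ s' : S, ∑ a' : A, p h s' a' s * q h s' a')

lemma l1norm_nonneg {S A : Type*} [Fintype S] [Fintype A] (H : ℕ) (q : ℕ → S → A → ℝ) :
    0 ≤ l1norm H q := by
  refine Finset.sum_nonneg fun h _ => Finset.sum_nonneg fun s _ => Finset.sum_nonneg fun a _ => ?_
  exact abs_nonneg _

lemma costVal_add {S A : Type*} [Fintype S] [Fintype A] (H : ℕ) (c q q' : ℕ → S → A → ℝ) :
    costVal H c (fun h s a => q h s a + q' h s a) = costVal H c q + costVal H c q' := by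
  simp [costVal, add_mul, Finset.sum_add_distrib]

lemma costVal_sub {S A : Type*} [Fintype S] [Fintype A] (H : ℕ) (c q q' : ℕ → S → A → ℝ) :
    costVal H c (fun h s a => q h s a - q' h s a) = costVal H c q - costVal H c q' := by
  simp [costVal, sub_mul, Finset.sum_sub_distrib]

lemma costVal_sum {S A : Type*} [Fintype S] [Fintype A] (H : ℕ) (c : ℕ → S → A → ℝ)
    (F : Finset ℕ) (q : ℕ → ℕ → S → A → ℝ) :
    costVal H c (fun h s a => ∑ t ∈ F, q t h s a) = ∑ t ∈ F, costVal H c (q t) := by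
  classical
  induction F using Finset.induction_on with
  | empty => simp [costVal]
  | insert x F' hx ih =>
    simp only [Finset.sum_insert hx]
    rw [← ih, ← costVal_add]

lemma costVal_div {S A : Type*} [Fintype S] [Fintype A] (H : ℕ) (c q : ℕ → S → A → ℝ) (T : ℝ) :
    costVal H c (fun h s a => q h s a / T) = costVal H c q / T := by
  simp [costVal, div_mul_eq_mul_div, ← Finset.sum_div]

lemma abs_costVal_le {S A : Type*} [Fintype S] [Fintype A] (H : ℕ) (c q : ℕ → S → A → ℝ)
    (M : ℝ) (hM : ∀ h ≤ H, ∀ (s : S) (a : A), |c h s a| ≤ M) :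
    |costVal H c q| ≤ M * l1norm H q := by
  have h1 : |costVal H c q| ≤
      ∑ h ∈ Finset.range (H + 1), ∑ s : S, ∑ a : A, |q h s a * c h s a| := by
    refine (Finset.abs_sum_le_sum_abs _ _).trans (Finset.sum_le_sum fun h _ => ?_)
    refine (Finset.abs_sum_le_sum_abs _ _).trans (Finset.sum_le_sum fun s _ => ?_)
    exact Finset.abs_sum_le_sum_abs _ _
  refine h1.trans ?_
  rw [l1norm, Finset.mul_sum]
  refine Finset.sum_le_sum fun h hh => ?_
  rw [Finset.mul_sum]
  refine Finset.sum_le_sum fun s _ => ?_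
  rw [Finset.mul_sum]
  refine Finset.sum_le_sum fun a _ => ?_
  rw [abs_mul, mul_comm M]
  exact mul_le_mul_of_nonneg_left (hM h (Finset.mem_range_succ_iff.mp hh) s a) (abs_nonneg _)

theorem stmt4 {S A : Type*} [Fintype S] [Fintype A] [DecidableEq S] [Nonempty S] [Nonempty A]
    (H : ℕ) (s0 : S) (p : ℕ → S → A → S → ℝ)
    (hp : ∀ h < H, ∀ (s : S) (a : A), (∀ s' : S, 0 ≤ p h s a s') ∧ ∑ s' : S, p h s a s' = 1)
    (c d : ℕ → S → A → ℝ) (Cbar Dbar : ℝ)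
    (hc : ∀ h ≤ H, ∀ (s : S) (a : A), 0 ≤ c h s a ∧ c h s a ≤ Cbar)
    (hd : ∀ h ≤ H, ∀ (s : S) (a : A), 0 ≤ d h s a ∧ d h s a ≤ Dbar)
    (l B : ℝ) (hB : 0 < B) (T : ℕ) (hT : 1 ≤ T)
    (εbr εoe R : ℝ) (hεbr : 0 ≤ εbr) (hεoe : 0 ≤ εoe) (hR : 0 ≤ R)
    (qt qhat : ℕ → ℕ → S → A → ℝ) (lam : ℕ → ℝ × ℝ)
    (hqt : ∀ t < T, IsOccupancy H s0 p (qt t))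
    (hqhat : ∀ t < T, l1norm H (fun h s a => qt t h s a - qhat t h s a) ≤ εoe)
    (hlam : ∀ t < T, 0 ≤ (lam t).1 ∧ 0 ≤ (lam t).2 ∧ (lam t).1 + (lam t).2 = B)
    (hbr : ∀ t < T, ∀ q : ℕ → S → A → ℝ, IsOccupancy H s0 p q →
      lagrangian H c d l (qt t) (lam t) ≤ lagrangian H c d l q (lam t) + εbr)
    (hnr : ∀ μ : ℝ × ℝ, 0 ≤ μ.1 → 0 ≤ μ.2 → μ.1 + μ.2 = B →
      (∑ t ∈ Finset.range T, lagrangian H c d l (qhat t) μ) -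
        (∑ t ∈ Finset.range T, lagrangian H c d l (qhat t) (lam t)) ≤ R)
    (qbar : ℕ → S → A → ℝ)
    (hqbar : qbar = fun h s a => (∑ t ∈ Finset.range T, qt t h s a) / T)
    (lamtil : ℝ × ℝ)
    (hlamtil : lamtil = ((∑ t ∈ Finset.range T, (lam t).1) / T,
                         (∑ t ∈ Finset.range T, (lam t).2) / T))
    (εest εol : ℝ) (hεest : εest = (Cbar + B * Dbar) * εoe)
    (hεol : εol = 2 * εbr + 2 * εest + R / T) :
    ∀ qf : ℕ → S → A → ℝ, IsOccupancy H s0 p qf → costVal H d qf ≤ l →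
      lagrangian H c d l qbar lamtil ≤ costVal H c qf + εol + εest := by
  intro qf hqf hDl
  have hTpos : (0:ℝ) < (T:ℝ) := by exact_mod_cast hT
  obtain ⟨s⟩ := ‹Nonempty S›
  obtain ⟨a⟩ := ‹Nonempty A›
  have hCbar : 0 ≤ Cbar := le_trans (hc 0 (Nat.zero_le _) s a).1 (hc 0 (Nat.zero_le _) s a).2
  have hDbar : 0 ≤ Dbar := le_trans (hd 0 (Nat.zero_le _) s a).1 (hd 0 (Nat.zero_le _) s a).2
  have hεest0 : 0 ≤ εest := by
    rw [hεest]; positivity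
  -- bounds on |c|, |d|
  have hcM : ∀ h ≤ H, ∀ (s : S) (a : A), |c h s a| = c h s a ∧ c h s a ≤ Cbar := by
    intro h hh s a; exact ⟨abs_of_nonneg (hc h hh s a).1, (hc h hh s a).2⟩
  -- key perturbation bound
  have hdiff : ∀ t < T, ∀ μ : ℝ × ℝ, 0 ≤ μ.1 → μ.1 ≤ B →
      |lagrangian H c d l (qt t) μ - lagrangian H c d l (qhat t) μ| ≤ εest := by
    intro t ht μ hμ0 hμB
    set Δq : ℕ → S → A → ℝ := fun h s a => qt t h s a - qhat t h s a with hΔq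
    have heq : lagrangian H c d l (qt t) μ - lagrangian H c d l (qhat t) μ =
        costVal H c Δq + μ.1 * costVal H d Δq := by
      rw [hΔq, costVal_sub, costVal_sub]; simp [lagrangian]; ring
    have hA : |costVal H c Δq| ≤ Cbar * l1norm H Δq :=
      abs_costVal_le H c Δq Cbar (fun h hh s a => by
        rw [abs_of_nonneg (hc h hh s a).1]; exact (hc h hh s a).2)
    have hBv : |costVal H d Δq| ≤ Dbar * l1norm H Δq :=
      abs_costVal_le H d Δq Dbar (fun h hh s a => by
        rw [abs_of_nonneg (hd h hh s a).1]; exact (hd h hh s a).2)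
    have hl1 : l1norm H Δq ≤ εoe := hqhat t ht
    have hl10 : 0 ≤ l1norm H Δq := l1norm_nonneg H Δq
    have h1 : |costVal H c Δq + μ.1 * costVal H d Δq| ≤
        |costVal H c Δq| + μ.1 * |costVal H d Δq| := by
      refine (abs_add_le _ _).trans ?_
      rw [abs_mul, abs_of_nonneg hμ0]
    have h2 : |costVal H c Δq| ≤ Cbar * εoe :=
      hA.trans (mul_le_mul_of_nonneg_left hl1 hCbar)
    have h3 : μ.1 * |costVal H d Δq| ≤ B * (Dbar * εoe) := by
      refine le_trans (mul_le_mul_of_nonneg_right hμB (abs_nonneg _)) ?_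
      exact mul_le_mul_of_nonneg_left
        (hBv.trans (mul_le_mul_of_nonneg_left hl1 hDbar)) (le_of_lt hB)
    rw [heq, hεest]
    nlinarith [h1, h2, h3]
  -- lamtil properties
  have hs1 : 0 ≤ (∑ t ∈ Finset.range T, (lam t).1) :=
    Finset.sum_nonneg fun t ht => (hlam t (Finset.mem_range.mp ht)).1
  have hs2 : 0 ≤ (∑ t ∈ Finset.range T, (lam t).2) :=
    Finset.sum_nonneg fun t ht => (hlam t (Finset.mem_range.mp ht)).2.1
  have hsumB : (∑ t ∈ Finset.range T, (lam t).1) + (∑ t ∈ Finset.range T, (lam t).2)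
      = T * B := by
    rw [← Finset.sum_add_distrib]
    rw [Finset.sum_congr rfl (fun t ht => (hlam t (Finset.mem_range.mp ht)).2.2)]
    simp [mul_comm]
  have hlt1 : 0 ≤ lamtil.1 := by rw [hlamtil]; positivity
  have hlt2 : 0 ≤ lamtil.2 := by rw [hlamtil]; positivity
  have hltsum : lamtil.1 + lamtil.2 = B := by
    rw [hlamtil]
    field_simp
    try linarith [hsumB]
  have hlt1B : lamtil.1 ≤ B := by linarith [hltsum, hlt2]
  -- step A: L(qbar, lamtil) = (Σ L(qt, lamtil))/T
  have hC : costVal H c qbar = (∑ t ∈ Finset.range T, costVal H c (qt t)) / T := by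
    rw [hqbar, costVal_div (q := fun h s a => ∑ t ∈ Finset.range T, qt t h s a),
      costVal_sum]
  have hD : costVal H d qbar = (∑ t ∈ Finset.range T, costVal H d (qt t)) / T := by
    rw [hqbar, costVal_div (q := fun h s a => ∑ t ∈ Finset.range T, qt t h s a),
      costVal_sum]
  have keyA : lagrangian H c d l qbar lamtil =
      (∑ t ∈ Finset.range T, lagrangian H c d l (qt t) lamtil) / T := by
    have hexp : ∑ t ∈ Finset.range T, lagrangian H c d l (qt t) lamtil =
        (∑ t ∈ Finset.range T, costVal H c (qt t)) +
        lamtil.1 * ((∑ t ∈ Finset.range T, costVal H d (qt t)) - T * l) := by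
      simp only [lagrangian, Finset.sum_add_distrib, mul_sub, Finset.sum_sub_distrib,
        ← Finset.mul_sum, Finset.sum_const, Finset.card_range, nsmul_eq_mul]
      try ring
    rw [hexp, lagrangian, hC, hD]
    field_simp
    try ring
  -- termwise steps
  have step1 : ∑ t ∈ Finset.range T, lagrangian H c d l (qt t) lamtil ≤
      (∑ t ∈ Finset.range T, lagrangian H c d l (qhat t) lamtil) + T * εest := by
    have := Finset.sum_le_sum (f := fun t => lagrangian H c d l (qt t) lamtil)
      (g := fun t => lagrangian H c d l (qhat t) lamtil + εest)
      (fun t ht => by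
        have := abs_le.mp (hdiff t (Finset.mem_range.mp ht) lamtil hlt1 hlt1B)
        linarith [this.2])
    simpa [Finset.sum_add_distrib, Finset.card_range, mul_comm] using this
  have step2 : ∑ t ∈ Finset.range T, lagrangian H c d l (qhat t) lamtil ≤
      (∑ t ∈ Finset.range T, lagrangian H c d l (qhat t) (lam t)) + R := by
    linarith [hnr lamtil hlt1 hlt2 hltsum]
  have step3 : ∑ t ∈ Finset.range T, lagrangian H c d l (qhat t) (lam t) ≤
      (∑ t ∈ Finset.range T, lagrangian H c d l (qt t) (lam t)) + T * εest := by
    have := Finset.sum_le_sum (f := fun t => lagrangian H c d l (qhat t) (lam t))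
      (g := fun t => lagrangian H c d l (qt t) (lam t) + εest)
      (fun t ht => by
        have h1B : (lam t).1 ≤ B := by
          obtain ⟨ha, hb, hab⟩ := hlam t (Finset.mem_range.mp ht)
          linarith
        have := abs_le.mp (hdiff t (Finset.mem_range.mp ht) (lam t)
          (hlam t (Finset.mem_range.mp ht)).1 h1B)
        linarith [this.1])
    simpa [Finset.sum_add_distrib, Finset.card_range, mul_comm] using this
  have step4 : ∑ t ∈ Finset.range T, lagrangian H c d l (qt t) (lam t) ≤
      (∑ t ∈ Finset.range T, lagrangian H c d l qf (lam t)) + T * εbr := by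
    have := Finset.sum_le_sum (f := fun t => lagrangian H c d l (qt t) (lam t))
      (g := fun t => lagrangian H c d l qf (lam t) + εbr)
      (fun t ht => hbr t (Finset.mem_range.mp ht) qf hqf)
    simpa [Finset.sum_add_distrib, Finset.card_range, mul_comm] using this
  have step5 : ∑ t ∈ Finset.range T, lagrangian H c d l qf (lam t) ≤
      T * costVal H c qf := by
    have := Finset.sum_le_sum (f := fun t => lagrangian H c d l qf (lam t))
      (g := fun _ => costVal H c qf)
      (fun t ht => by
        have h0 := (hlam t (Finset.mem_range.mp ht)).1
        have : (lam t).1 * (costVal H d qf - l) ≤ 0 :=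
          mul_nonpos_of_nonneg_of_nonpos h0 (by linarith)
        simp only [lagrangian]
        linarith)
    simpa [Finset.sum_const, Finset.card_range, nsmul_eq_mul] using this
  -- combine
  have hfinal : ∑ t ∈ Finset.range T, lagrangian H c d l (qt t) lamtil ≤
      T * costVal H c qf + T * εbr + 2 * (T * εest) + R := by
    linarith
  rw [keyA]
  rw [div_le_iff₀ hTpos]
  have : (costVal H c qf + εol + εest) * T =
      T * costVal H c qf + T * εol + T * εest := by ring
  rw [this, hεol]
  have hRT : R = T * (R / T) := by field_simp
  nlinarith [hfinal, mul_nonneg (le_of_lt hTpos) hεbr, mul_nonneg (le_of_lt hTpos) hεest0]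
end

section
/- Under the iterate hypotheses, suppose further that q̃_h(s,a) ≥ 0 for all h,s,a, that Σ_{b∈A} q̃_h(s,b) > 0 for all h,s, and that there exists a feasible occupancy measure q^f ∈ Δ with D(q^f) ≤ l. Define the policy π̃ by π̃_h(a|s) = q̃_h(s,a) / Σ_{b∈A} q̃_h(s,b). Then the occupancy measure q^{π̃} of π̃ approximately satisfies the constraint: D(q^{π̃}) ≤ l + D̄·(2H+3)·ε_oe + 2(C̄·(H+1) + ε_ol + ε_est)/B, where ε_est = (C̄ + B·D̄)·ε_oe and ε_ol = 2ε_br + 2ε_est + R/T. -/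
/-- A policy: `π h s a` is the probability of action `a` at state `s`, step `h`. -/
def IsPolicy {S A : Type*} [Fintype A] (H : ℕ) (π : ℕ → S → A → ℝ) : Prop :=
  ∀ h ≤ H, ∀ s : S, (∀ a : A, 0 ≤ π h s a) ∧ ∑ a : A, π h s a = 1

/-- The occupancy measure q^π of a policy π, defined recursively. -/
def occMeasure {S A : Type*} [Fintype S] [Fintype A] [DecidableEq S] (s0 : S)
    (p : ℕ → S → A → S → ℝ) (π : ℕ → S → A → ℝ) : ℕ → S → A → ℝ
  | 0 => fun s a => if s = s0 then π 0 s a else 0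
  | (h + 1) => fun s a =>
      π (h + 1) s a * ∑ s' : S, ∑ a' : A, p h s' a' s * occMeasure s0 p π h s' a'

lemma abs_costVal_sub_le {S A : Type*} [Fintype S] [Fintype A] (H : ℕ) (c q q' : ℕ → S → A → ℝ) (M : ℝ)
    (hM : ∀ h ≤ H, ∀ (s : S) (a : A), |c h s a| ≤ M) :
    |costVal H c q - costVal H c q'| ≤ M * l1norm H (fun h s a => q h s a - q' h s a) := by
  have key : costVal H c q - costVal H c q'
      = ∑ h ∈ Finset.range (H + 1), ∑ s : S, ∑ a : A, (q h s a - q' h s a) * c h s a := by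
    unfold costVal
    rw [← Finset.sum_sub_distrib]
    refine Finset.sum_congr rfl fun h _ => ?_
    rw [← Finset.sum_sub_distrib]
    refine Finset.sum_congr rfl fun s _ => ?_
    rw [← Finset.sum_sub_distrib]
    refine Finset.sum_congr rfl fun a _ => ?_
    ring
  rw [key]
  unfold l1norm
  rw [Finset.mul_sum]
  refine le_trans (Finset.abs_sum_le_sum_abs _ _) (Finset.sum_le_sum fun h hh => ?_)
  rw [Finset.mul_sum]
  refine le_trans (Finset.abs_sum_le_sum_abs _ _) (Finset.sum_le_sum fun s _ => ?_)
  rw [Finset.mul_sum]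
  refine le_trans (Finset.abs_sum_le_sum_abs _ _) (Finset.sum_le_sum fun a _ => ?_)
  rw [abs_mul, mul_comm]
  exact mul_le_mul_of_nonneg_right (hM h (Nat.lt_succ_iff.mp (Finset.mem_range.mp hh)) s a)
    (abs_nonneg _)

lemma occ_mass {S A : Type*} [Fintype S] [Fintype A] [DecidableEq S] (H : ℕ) (s0 : S)
    (p : ℕ → S → A → S → ℝ)
    (hp : ∀ h < H, ∀ (s : S) (a : A), (∀ s' : S, 0 ≤ p h s a s') ∧ ∑ s' : S, p h s a s' = 1)
    (q : ℕ → S → A → ℝ) (hq : IsOccupancy H s0 p q) :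
    ∀ h ≤ H, ∑ s : S, ∑ a : A, q h s a = 1 := by
  intro h
  induction h with
  | zero =>
    intro _
    simp only [hq.2.1]
    simp
  | succ n ih =>
    intro hn
    have hnH : n < H := hn
    calc ∑ s : S, ∑ a : A, q (n + 1) s a
        = ∑ s : S, ∑ s' : S, ∑ a' : A, p n s' a' s * q n s' a' := by
          refine Finset.sum_congr rfl fun s _ => hq.2.2 n hnH s
      _ = ∑ s' : S, ∑ a' : A, (∑ s : S, p n s' a' s) * q n s' a' := by
          rw [Finset.sum_comm]
          refine Finset.sum_congr rfl fun s' _ => ?_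
          rw [Finset.sum_comm]
          refine Finset.sum_congr rfl fun a' _ => ?_
          rw [Finset.sum_mul]
      _ = ∑ s' : S, ∑ a' : A, q n s' a' := by
          refine Finset.sum_congr rfl fun s' _ => Finset.sum_congr rfl fun a' _ => ?_
          rw [(hp n hnH s' a').2, one_mul]
      _ = 1 := ih (le_of_lt hnH)

lemma costVal_nonneg {S A : Type*} [Fintype S] [Fintype A] (H : ℕ) (c q : ℕ → S → A → ℝ)
    (hc : ∀ h ≤ H, ∀ (s : S) (a : A), 0 ≤ c h s a)
    (hq : ∀ h ≤ H, ∀ (s : S) (a : A), 0 ≤ q h s a) : 0 ≤ costVal H c q := by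
  unfold costVal
  refine Finset.sum_nonneg fun h hh => Finset.sum_nonneg fun s _ => Finset.sum_nonneg fun a _ => ?_
  have hhH := Nat.lt_succ_iff.mp (Finset.mem_range.mp hh)
  exact mul_nonneg (hq h hhH s a) (hc h hhH s a)

lemma costVal_le {S A : Type*} [Fintype S] [Fintype A] [DecidableEq S] (H : ℕ) (s0 : S)
    (p : ℕ → S → A → S → ℝ)
    (hp : ∀ h < H, ∀ (s : S) (a : A), (∀ s' : S, 0 ≤ p h s a s') ∧ ∑ s' : S, p h s a s' = 1)
    (c : ℕ → S → A → ℝ) (Cbar : ℝ)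
    (hc : ∀ h ≤ H, ∀ (s : S) (a : A), c h s a ≤ Cbar)
    (q : ℕ → S → A → ℝ) (hq : IsOccupancy H s0 p q) :
    costVal H c q ≤ Cbar * ((H : ℝ) + 1) := by
  unfold costVal
  have : ∀ h ∈ Finset.range (H + 1), ∑ s : S, ∑ a : A, q h s a * c h s a ≤ Cbar := by
    intro h hh
    have hhH := Nat.lt_succ_iff.mp (Finset.mem_range.mp hh)
    calc ∑ s : S, ∑ a : A, q h s a * c h s a
        ≤ ∑ s : S, ∑ a : A, q h s a * Cbar := by
          refine Finset.sum_le_sum fun s _ => Finset.sum_le_sum fun a _ =>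
            mul_le_mul_of_nonneg_left (hc h hhH s a) (hq.1 h hhH s a)
      _ = Cbar := by
          simp only [← Finset.sum_mul]
          rw [occ_mass H s0 p hp q hq h hhH, one_mul]
  calc (∑ h ∈ Finset.range (H + 1), ∑ s : S, ∑ a : A, q h s a * c h s a)
      ≤ ∑ _h ∈ Finset.range (H + 1), Cbar := Finset.sum_le_sum this
    _ = Cbar * ((H : ℝ) + 1) := by
        rw [Finset.sum_const, Finset.card_range]
        push_cast
        ring
lemma costVal_avg {S A : Type*} [Fintype S] [Fintype A] (H : ℕ) (c : ℕ → S → A → ℝ)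
    (T : ℕ) (q : ℕ → ℕ → S → A → ℝ) :
    costVal H c (fun h s a => (∑ t ∈ Finset.range T, q t h s a) / T)
      = (∑ t ∈ Finset.range T, costVal H c (q t)) / T := by
  have key : (∑ t ∈ Finset.range T, ∑ h ∈ Finset.range (H+1), ∑ s : S, ∑ a : A,
        q t h s a * c h s a)
      = ∑ h ∈ Finset.range (H+1), ∑ s : S, ∑ a : A,
        (∑ t ∈ Finset.range T, q t h s a) * c h s a := by
    rw [Finset.sum_comm]
    refine Finset.sum_congr rfl fun h _ => ?_
    rw [Finset.sum_comm]
    refine Finset.sum_congr rfl fun s _ => ?_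
    rw [Finset.sum_comm]
    refine Finset.sum_congr rfl fun a _ => ?_
    rw [Finset.sum_mul]
  unfold costVal
  rw [key, Finset.sum_div]
  refine Finset.sum_congr rfl fun h _ => ?_
  rw [Finset.sum_div]
  refine Finset.sum_congr rfl fun s _ => ?_
  rw [Finset.sum_div]
  refine Finset.sum_congr rfl fun a _ => ?_
  rw [div_mul_eq_mul_div]

lemma avg_occ {S A : Type*} [Fintype S] [Fintype A] [DecidableEq S] (H : ℕ) (s0 : S)
    (p : ℕ → S → A → S → ℝ) (T : ℕ) (hT : 1 ≤ T) (q : ℕ → ℕ → S → A → ℝ)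
    (hq : ∀ t < T, IsOccupancy H s0 p (q t)) :
    IsOccupancy H s0 p (fun h s a => (∑ t ∈ Finset.range T, q t h s a) / T) := by
  have hT0 : (0:ℝ) < T := by exact_mod_cast hT
  refine ⟨?_, ?_, ?_⟩
  · intro h hh s a
    exact div_nonneg (Finset.sum_nonneg fun t ht =>
      (hq t (Finset.mem_range.mp ht)).1 h hh s a) hT0.le
  · intro s
    rw [← Finset.sum_div, Finset.sum_comm,
      Finset.sum_congr rfl fun t ht => (hq t (Finset.mem_range.mp ht)).2.1 s,
      Finset.sum_const, Finset.card_range]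
    by_cases hs : s = s0 <;> simp [hs, div_self hT0.ne']
  · intro h hh s
    rw [← Finset.sum_div, Finset.sum_comm,
      Finset.sum_congr rfl fun t ht => (hq t (Finset.mem_range.mp ht)).2.2 h hh s,
      Finset.sum_comm, Finset.sum_div]
    refine Finset.sum_congr rfl fun s' _ => ?_
    rw [Finset.sum_comm, Finset.sum_div]
    refine Finset.sum_congr rfl fun a' _ => ?_
    rw [← Finset.mul_sum, mul_div_assoc]

lemma occ_approx {S A : Type*} [Fintype S] [Fintype A] [DecidableEq S] (H : ℕ) (s0 : S)
    (p : ℕ → S → A → S → ℝ)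
    (hp : ∀ h < H, ∀ (s : S) (a : A), (∀ s' : S, 0 ≤ p h s a s') ∧ ∑ s' : S, p h s a s' = 1)
    (qtil qbar : ℕ → S → A → ℝ) (hqbar : IsOccupancy H s0 p qbar)
    (hpos : ∀ h ≤ H, ∀ (s : S) (a : A), 0 ≤ qtil h s a)
    (hsum : ∀ h ≤ H, ∀ s : S, 0 < ∑ b : A, qtil h s b) :
    l1norm H (fun h s a => occMeasure s0 p (fun h s a => qtil h s a / ∑ b : A, qtil h s b) h s a
      - qtil h s a) ≤ 2 * ((H : ℝ) + 1) * l1norm H (fun h s a => qtil h s a - qbar h s a) := by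
  set π : ℕ → S → A → ℝ := fun h s a => qtil h s a / ∑ b : A, qtil h s b with hπ
  set Q : ℕ → S → A → ℝ := occMeasure s0 p π with hQdef
  have hπsum : ∀ h ≤ H, ∀ s : S, ∑ a : A, π h s a = 1 := by
    intro h hh s
    rw [hπ]
    simp only
    rw [← Finset.sum_div, div_self (ne_of_gt (hsum h hh s))]
  have hπnn : ∀ h ≤ H, ∀ (s : S) (a : A), 0 ≤ π h s a := fun h hh s a =>
    div_nonneg (hpos h hh s a) (le_of_lt (hsum h hh s))
  have hfact : ∀ h ≤ H, ∀ (s : S) (a : A), qtil h s a = π h s a * (∑ b : A, qtil h s b) := by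
    intro h hh s a
    rw [hπ]
    simp only
    exact (div_mul_cancel₀ _ (ne_of_gt (hsum h hh s))).symm
  -- structural fact: Q h s a = π h s a * (∑ b, Q h s b) for h ≤ H
  have hm0 : ∀ s : S, ∑ b : A, Q 0 s b = if s = s0 then 1 else 0 := by
    intro s
    by_cases hs : s = s0
    · simp [hQdef, occMeasure, hs, hπsum 0 (Nat.zero_le H) s0]
    · simp [hQdef, occMeasure, hs]
  have hmstep : ∀ h, h + 1 ≤ H → ∀ s : S,
      ∑ b : A, Q (h + 1) s b = ∑ s' : S, ∑ a' : A, p h s' a' s * Q h s' a' := by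
    intro h hh s
    show ∑ b : A, π (h+1) s b * (∑ s' : S, ∑ a' : A, p h s' a' s * Q h s' a') = _
    rw [← Finset.sum_mul, hπsum (h+1) hh s, one_mul]
  have hstruct : ∀ h ≤ H, ∀ (s : S) (a : A), Q h s a = π h s a * (∑ b : A, Q h s b) := by
    intro h hh s a
    match h with
    | 0 =>
      rw [hm0 s]
      by_cases hs : s = s0
      · simp [hQdef, occMeasure, hs]
      · simp [hQdef, occMeasure, hs]
    | Nat.succ n =>
      rw [hmstep n hh s]
      rfl
  -- level-h ℓ¹ identity
  have hlvl : ∀ h ≤ H, ∀ s : S, ∑ a : A, |Q h s a - qtil h s a|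
      = |(∑ b : A, Q h s b) - (∑ b : A, qtil h s b)| := by
    intro h hh s
    have hterm : ∀ a : A, Q h s a - qtil h s a
        = π h s a * ((∑ b : A, Q h s b) - (∑ b : A, qtil h s b)) := by
      intro a
      rw [hstruct h hh s a, hfact h hh s a]
      ring
    calc ∑ a : A, |Q h s a - qtil h s a|
        = ∑ a : A, π h s a * |(∑ b : A, Q h s b) - (∑ b : A, qtil h s b)| := by
          refine Finset.sum_congr rfl fun a _ => ?_
          rw [hterm a, abs_mul, abs_of_nonneg (hπnn h hh s a)]
      _ = _ := by rw [← Finset.sum_mul, hπsum h hh s, one_mul]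
  set e : ℕ → ℝ := fun h => ∑ s : S, |(∑ b : A, Q h s b) - (∑ b : A, qtil h s b)| with he
  set ε : ℕ → ℝ := fun h => ∑ s : S, ∑ a : A, |qtil h s a - qbar h s a| with hε
  have hεnn : ∀ h, 0 ≤ ε h := by
    intro h
    exact Finset.sum_nonneg fun s _ => Finset.sum_nonneg fun a _ => abs_nonneg _
  -- |w h s - wb h s| bound
  have hwb : ∀ h, ∑ s : S, |(∑ b : A, qbar h s b) - (∑ b : A, qtil h s b)| ≤ ε h := by
    intro h
    refine Finset.sum_le_sum fun s _ => ?_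
    rw [← Finset.sum_sub_distrib]
    refine le_trans (Finset.abs_sum_le_sum_abs _ _) (Finset.sum_le_sum fun a _ => ?_)
    rw [abs_sub_comm]
  have hind : ∀ h ≤ H, e h ≤ 2 * (∑ k ∈ Finset.range h, ε k) + ε h := by
    intro h
    induction h with
    | zero =>
      intro _
      simp only [Finset.range_zero, Finset.sum_empty, mul_zero, zero_add]
      calc e 0 = ∑ s : S, |(∑ b : A, qbar 0 s b) - (∑ b : A, qtil 0 s b)| := by
            refine Finset.sum_congr rfl fun s _ => ?_
            rw [hm0 s, hqbar.2.1 s]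
        _ ≤ ε 0 := hwb 0
    | succ n ih =>
      intro hn
      have hnH : n < H := hn
      have key : ∀ s : S, (∑ b : A, Q (n+1) s b) - (∑ b : A, qtil (n+1) s b)
          = (∑ s' : S, ∑ a' : A, p n s' a' s * (Q n s' a' - qtil n s' a'))
            + (∑ s' : S, ∑ a' : A, p n s' a' s * (qtil n s' a' - qbar n s' a'))
            + ((∑ b : A, qbar (n+1) s b) - (∑ b : A, qtil (n+1) s b)) := by
        intro s
        rw [hmstep n hn s, hqbar.2.2 n hnH s]
        simp only [mul_sub, Finset.sum_sub_distrib]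
        ring
      have step1 : ∑ s : S, |∑ s' : S, ∑ a' : A, p n s' a' s * (Q n s' a' - qtil n s' a')|
          ≤ e n := by
        calc ∑ s : S, |∑ s' : S, ∑ a' : A, p n s' a' s * (Q n s' a' - qtil n s' a')|
            ≤ ∑ s : S, ∑ s' : S, ∑ a' : A, p n s' a' s * |Q n s' a' - qtil n s' a'| := by
              refine Finset.sum_le_sum fun s _ => ?_
              refine le_trans (Finset.abs_sum_le_sum_abs _ _)
                (Finset.sum_le_sum fun s' _ => ?_)
              refine le_trans (Finset.abs_sum_le_sum_abs _ _)
                (Finset.sum_le_sum fun a' _ => ?_)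
              rw [abs_mul, abs_of_nonneg ((hp n hnH s' a').1 s)]
          _ = ∑ s' : S, ∑ a' : A, (∑ s : S, p n s' a' s) * |Q n s' a' - qtil n s' a'| := by
              rw [Finset.sum_comm]
              refine Finset.sum_congr rfl fun s' _ => ?_
              rw [Finset.sum_comm]
              refine Finset.sum_congr rfl fun a' _ => ?_
              rw [Finset.sum_mul]
          _ = ∑ s' : S, ∑ a' : A, |Q n s' a' - qtil n s' a'| := by
              refine Finset.sum_congr rfl fun s' _ => Finset.sum_congr rfl fun a' _ => ?_
              rw [(hp n hnH s' a').2, one_mul]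
          _ = e n := Finset.sum_congr rfl fun s' _ => hlvl n (le_of_lt hnH) s'
      have step2 : ∑ s : S, |∑ s' : S, ∑ a' : A, p n s' a' s * (qtil n s' a' - qbar n s' a')|
          ≤ ε n := by
        calc ∑ s : S, |∑ s' : S, ∑ a' : A, p n s' a' s * (qtil n s' a' - qbar n s' a')|
            ≤ ∑ s : S, ∑ s' : S, ∑ a' : A, p n s' a' s * |qtil n s' a' - qbar n s' a'| := by
              refine Finset.sum_le_sum fun s _ => ?_
              refine le_trans (Finset.abs_sum_le_sum_abs _ _)
                (Finset.sum_le_sum fun s' _ => ?_)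
              refine le_trans (Finset.abs_sum_le_sum_abs _ _)
                (Finset.sum_le_sum fun a' _ => ?_)
              rw [abs_mul, abs_of_nonneg ((hp n hnH s' a').1 s)]
          _ = ∑ s' : S, ∑ a' : A, (∑ s : S, p n s' a' s) * |qtil n s' a' - qbar n s' a'| := by
              rw [Finset.sum_comm]
              refine Finset.sum_congr rfl fun s' _ => ?_
              rw [Finset.sum_comm]
              refine Finset.sum_congr rfl fun a' _ => ?_
              rw [Finset.sum_mul]
          _ = ε n := by
              refine Finset.sum_congr rfl fun s' _ => Finset.sum_congr rfl fun a' _ => ?_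
              rw [(hp n hnH s' a').2, one_mul]
      have tri : e (n+1) ≤ e n + ε n + ε (n+1) := by
        calc e (n+1)
            ≤ ∑ s : S, (|∑ s' : S, ∑ a' : A, p n s' a' s * (Q n s' a' - qtil n s' a')|
              + |∑ s' : S, ∑ a' : A, p n s' a' s * (qtil n s' a' - qbar n s' a')|
              + |(∑ b : A, qbar (n+1) s b) - (∑ b : A, qtil (n+1) s b)|) := by
              refine Finset.sum_le_sum fun s _ => ?_
              rw [key s]
              exact le_trans (abs_add_le _ _) (add_le_add_left (abs_add_le _ _) _)
          _ = (∑ s : S, |∑ s' : S, ∑ a' : A, p n s' a' s * (Q n s' a' - qtil n s' a')|)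
              + (∑ s : S, |∑ s' : S, ∑ a' : A, p n s' a' s * (qtil n s' a' - qbar n s' a')|)
              + ∑ s : S, |(∑ b : A, qbar (n+1) s b) - (∑ b : A, qtil (n+1) s b)| := by
              rw [Finset.sum_add_distrib, Finset.sum_add_distrib]
          _ ≤ e n + ε n + ε (n+1) := add_le_add (add_le_add step1 step2) (hwb (n+1))
      have ihn := ih (le_of_lt hnH)
      rw [Finset.sum_range_succ]
      linarith
  set εtot := l1norm H (fun h s a => qtil h s a - qbar h s a) with hεtot
  have hεtot_eq : εtot = ∑ k ∈ Finset.range (H+1), ε k := rfl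
  have hεsum : ∀ h ≤ H, (∑ k ∈ Finset.range (h+1), ε k) ≤ εtot := by
    intro h hh
    rw [hεtot_eq]
    exact Finset.sum_le_sum_of_subset_of_nonneg
      (Finset.range_subset_range.mpr (by omega)) (fun k _ _ => hεnn k)
  have hQeq : l1norm H (fun h s a => Q h s a - qtil h s a)
      = ∑ h ∈ Finset.range (H+1), e h := by
    unfold l1norm
    refine Finset.sum_congr rfl fun h hh => ?_
    exact Finset.sum_congr rfl fun s _ =>
      hlvl h (Nat.lt_succ_iff.mp (Finset.mem_range.mp hh)) s
  show l1norm H (fun h s a => Q h s a - qtil h s a) ≤ 2 * ((H : ℝ) + 1) * εtot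
  rw [hQeq]
  calc ∑ h ∈ Finset.range (H+1), e h
      ≤ ∑ _h ∈ Finset.range (H+1), 2 * εtot := by
        refine Finset.sum_le_sum fun h hh => ?_
        have hhH := Nat.lt_succ_iff.mp (Finset.mem_range.mp hh)
        have h1 := hind h hhH
        have h2 := hεsum h hhH
        rw [Finset.sum_range_succ] at h2
        linarith [hεnn h]
    _ = 2 * ((H : ℝ) + 1) * εtot := by
        rw [Finset.sum_const, Finset.card_range]
        push_cast
        ring

theorem stmt8 {S A : Type*} [Fintype S] [Fintype A] [DecidableEq S] [Nonempty S] [Nonempty A]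
    (H : ℕ) (s0 : S) (p : ℕ → S → A → S → ℝ)
    (hp : ∀ h < H, ∀ (s : S) (a : A), (∀ s' : S, 0 ≤ p h s a s') ∧ ∑ s' : S, p h s a s' = 1)
    (c d : ℕ → S → A → ℝ) (Cbar Dbar : ℝ)
    (hc : ∀ h ≤ H, ∀ (s : S) (a : A), 0 ≤ c h s a ∧ c h s a ≤ Cbar)
    (hd : ∀ h ≤ H, ∀ (s : S) (a : A), 0 ≤ d h s a ∧ d h s a ≤ Dbar)
    (l B : ℝ) (hB : 0 < B) (T : ℕ) (hT : 1 ≤ T)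
    (εbr εoe R : ℝ) (hεbr : 0 ≤ εbr) (hεoe : 0 ≤ εoe) (hR : 0 ≤ R)
    (qt qhat : ℕ → ℕ → S → A → ℝ) (lam : ℕ → ℝ × ℝ)
    (hqt : ∀ t < T, IsOccupancy H s0 p (qt t))
    (hqhat : ∀ t < T, l1norm H (fun h s a => qt t h s a - qhat t h s a) ≤ εoe)
    (hlam : ∀ t < T, 0 ≤ (lam t).1 ∧ 0 ≤ (lam t).2 ∧ (lam t).1 + (lam t).2 = B)
    (hbr : ∀ t < T, ∀ q : ℕ → S → A → ℝ, IsOccupancy H s0 p q →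
      lagrangian H c d l (qt t) (lam t) ≤ lagrangian H c d l q (lam t) + εbr)
    (hnr : ∀ μ : ℝ × ℝ, 0 ≤ μ.1 → 0 ≤ μ.2 → μ.1 + μ.2 = B →
      (∑ t ∈ Finset.range T, lagrangian H c d l (qhat t) μ) -
        (∑ t ∈ Finset.range T, lagrangian H c d l (qhat t) (lam t)) ≤ R)
    (qtil : ℕ → S → A → ℝ)
    (hqtil : qtil = fun h s a => (∑ t ∈ Finset.range T, qhat t h s a) / T)
    (hpos : ∀ h ≤ H, ∀ (s : S) (a : A), 0 ≤ qtil h s a)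
    (hsum : ∀ h ≤ H, ∀ s : S, 0 < ∑ b : A, qtil h s b)
    (qf : ℕ → S → A → ℝ) (hqf : IsOccupancy H s0 p qf) (hqffeas : costVal H d qf ≤ l)
    (εest εol : ℝ) (hεest : εest = (Cbar + B * Dbar) * εoe)
    (hεol : εol = 2 * εbr + 2 * εest + R / T) :
    costVal H d (occMeasure s0 p (fun h s a => qtil h s a / ∑ b : A, qtil h s b)) ≤
      l + Dbar * (2 * (H : ℝ) + 3) * εoe +
        2 * (Cbar * ((H : ℝ) + 1) + εol + εest) / B := by
  have hT0 : (0:ℝ) < T := by exact_mod_cast hT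
  obtain ⟨s₁⟩ := ‹Nonempty S›
  obtain ⟨a₁⟩ := ‹Nonempty A›
  have hC0 : 0 ≤ Cbar := le_trans (hc 0 (Nat.zero_le H) s₁ a₁).1 (hc 0 (Nat.zero_le H) s₁ a₁).2
  have hD0 : 0 ≤ Dbar := le_trans (hd 0 (Nat.zero_le H) s₁ a₁).1 (hd 0 (Nat.zero_le H) s₁ a₁).2
  have hεest0 : 0 ≤ εest := by
    rw [hεest]
    exact mul_nonneg (add_nonneg hC0 (mul_nonneg hB.le hD0)) hεoe
  have hcabs : ∀ h ≤ H, ∀ (s : S) (a : A), |c h s a| ≤ Cbar := fun h hh s a => by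
    rw [abs_of_nonneg (hc h hh s a).1]; exact (hc h hh s a).2
  have hdabs : ∀ h ≤ H, ∀ (s : S) (a : A), |d h s a| ≤ Dbar := fun h hh s a => by
    rw [abs_of_nonneg (hd h hh s a).1]; exact (hd h hh s a).2
  obtain ⟨qbar, hqbar_def⟩ :
      ∃ qb : ℕ → S → A → ℝ, qb = fun h s a => (∑ t ∈ Finset.range T, qt t h s a) / T := ⟨_, rfl⟩
  have hqbarOcc : IsOccupancy H s0 p qbar := by
    rw [hqbar_def]; exact avg_occ H s0 p T hT qt hqt
  -- Lagrangian estimation-error bound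
  have hLdiff : ∀ t < T, ∀ μ : ℝ × ℝ, 0 ≤ μ.1 → μ.1 ≤ B →
      |lagrangian H c d l (qt t) μ - lagrangian H c d l (qhat t) μ| ≤ εest := by
    intro t ht μ hμ0 hμB
    have hCb := abs_costVal_sub_le H c (qt t) (qhat t) Cbar hcabs
    have hDb := abs_costVal_sub_le H d (qt t) (qhat t) Dbar hdabs
    have hN0 : 0 ≤ l1norm H (fun h s a => qt t h s a - qhat t h s a) := l1norm_nonneg _ _
    have hN := hqhat t ht
    have key : lagrangian H c d l (qt t) μ - lagrangian H c d l (qhat t) μ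
        = (costVal H c (qt t) - costVal H c (qhat t))
          + μ.1 * (costVal H d (qt t) - costVal H d (qhat t)) := by
      unfold lagrangian; ring
    rw [key, hεest]
    calc |(costVal H c (qt t) - costVal H c (qhat t))
          + μ.1 * (costVal H d (qt t) - costVal H d (qhat t))|
        ≤ |costVal H c (qt t) - costVal H c (qhat t)|
          + μ.1 * |costVal H d (qt t) - costVal H d (qhat t)| := by
          refine le_trans (abs_add_le _ _) ?_
          rw [abs_mul, abs_of_nonneg hμ0]
      _ ≤ Cbar * l1norm H (fun h s a => qt t h s a - qhat t h s a)
          + B * (Dbar * l1norm H (fun h s a => qt t h s a - qhat t h s a)) :=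
          add_le_add hCb (mul_le_mul hμB hDb (abs_nonneg _) hB.le)
      _ = (Cbar + B * Dbar) * l1norm H (fun h s a => qt t h s a - qhat t h s a) := by ring
      _ ≤ (Cbar + B * Dbar) * εoe :=
          mul_le_mul_of_nonneg_left hN (add_nonneg hC0 (mul_nonneg hB.le hD0))
  -- best-response bound via the feasible point
  have hLfeas : ∀ t < T, lagrangian H c d l (qt t) (lam t) ≤ Cbar * ((H:ℝ)+1) + εbr := by
    intro t ht
    have h1 := hbr t ht qf hqf
    have h2 : lagrangian H c d l qf (lam t) ≤ Cbar * ((H:ℝ)+1) := by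
      have h3 := costVal_le H s0 p hp c Cbar (fun h hh s a => (hc h hh s a).2) qf hqf
      have h4 : (lam t).1 * (costVal H d qf - l) ≤ 0 :=
        mul_nonpos_of_nonneg_of_nonpos (hlam t ht).1 (by linarith)
      unfold lagrangian
      linarith
    linarith
  -- the four sums
  have hs1 : ∑ t ∈ Finset.range T, lagrangian H c d l (qt t) (B, 0)
      ≤ (∑ t ∈ Finset.range T, lagrangian H c d l (qhat t) (B, 0)) + T * εest := by
    have h0 : ∑ t ∈ Finset.range T, lagrangian H c d l (qt t) (B, 0)
        ≤ ∑ t ∈ Finset.range T, (lagrangian H c d l (qhat t) (B, 0) + εest) :=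
      Finset.sum_le_sum fun t ht => by
        have := (abs_le.mp (hLdiff t (Finset.mem_range.mp ht) (B, 0) hB.le le_rfl)).2
        linarith
    rwa [Finset.sum_add_distrib, Finset.sum_const, Finset.card_range, nsmul_eq_mul] at h0
  have hs2 : (∑ t ∈ Finset.range T, lagrangian H c d l (qhat t) (B, 0))
      ≤ (∑ t ∈ Finset.range T, lagrangian H c d l (qhat t) (lam t)) + R := by
    have := hnr (B, 0) hB.le le_rfl (by simp)
    linarith
  have hs3 : (∑ t ∈ Finset.range T, lagrangian H c d l (qhat t) (lam t))
      ≤ (∑ t ∈ Finset.range T, lagrangian H c d l (qt t) (lam t)) + T * εest := by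
    have h0 : ∑ t ∈ Finset.range T, lagrangian H c d l (qhat t) (lam t)
        ≤ ∑ t ∈ Finset.range T, (lagrangian H c d l (qt t) (lam t) + εest) :=
      Finset.sum_le_sum fun t ht => by
        have hlt := Finset.mem_range.mp ht
        have hl1B : (lam t).1 ≤ B := by
          have := hlam t hlt
          linarith [this.2.1, this.2.2]
        have := (abs_le.mp (hLdiff t hlt (lam t) (hlam t hlt).1 hl1B)).1
        linarith
    rwa [Finset.sum_add_distrib, Finset.sum_const, Finset.card_range, nsmul_eq_mul] at h0
  have hs4 : (∑ t ∈ Finset.range T, lagrangian H c d l (qt t) (lam t))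
      ≤ T * (Cbar * ((H:ℝ)+1) + εbr) := by
    calc (∑ t ∈ Finset.range T, lagrangian H c d l (qt t) (lam t))
        ≤ ∑ _t ∈ Finset.range T, (Cbar * ((H:ℝ)+1) + εbr) :=
          Finset.sum_le_sum fun t ht => hLfeas t (Finset.mem_range.mp ht)
      _ = T * (Cbar * ((H:ℝ)+1) + εbr) := by
          rw [Finset.sum_const, Finset.card_range, nsmul_eq_mul]
  have hsum_eq : ∑ t ∈ Finset.range T, lagrangian H c d l (qt t) (B, 0)
      = T * costVal H c qbar + T * (B * (costVal H d qbar - l)) := by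
    have h1 : ∑ t ∈ Finset.range T, costVal H c (qt t) = T * costVal H c qbar := by
      rw [hqbar_def, costVal_avg H c T qt]
      field_simp
    have h2 : ∑ t ∈ Finset.range T, costVal H d (qt t) = T * costVal H d qbar := by
      rw [hqbar_def, costVal_avg H d T qt]
      field_simp
    calc ∑ t ∈ Finset.range T, lagrangian H c d l (qt t) (B, 0)
        = ∑ t ∈ Finset.range T, (costVal H c (qt t) + B * (costVal H d (qt t) - l)) := rfl
      _ = (∑ t ∈ Finset.range T, costVal H c (qt t))
          + B * ((∑ t ∈ Finset.range T, costVal H d (qt t)) - T * l) := by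
          rw [Finset.sum_add_distrib, ← Finset.mul_sum, Finset.sum_sub_distrib,
            Finset.sum_const, Finset.card_range, nsmul_eq_mul]
      _ = T * costVal H c qbar + T * (B * (costVal H d qbar - l)) := by
          rw [h1, h2]; ring
  have hCnn : 0 ≤ costVal H c qbar :=
    costVal_nonneg H c qbar (fun h hh s a => (hc h hh s a).1) hqbarOcc.1
  have hkey : T * (B * (costVal H d qbar - l))
      ≤ T * (Cbar * ((H:ℝ)+1) + εbr) + 2 * (T * εest) + R := by
    have hTC : 0 ≤ T * costVal H c qbar := mul_nonneg hT0.le hCnn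
    linarith [hsum_eq, hs1, hs2, hs3, hs4]
  have hA3 : costVal H d qbar ≤ l + (Cbar * ((H:ℝ)+1) + εbr + 2 * εest + R / T) / B := by
    have hexp : T * (Cbar * ((H:ℝ)+1) + εbr + 2 * εest + R / T)
        = T * (Cbar * ((H:ℝ)+1) + εbr) + 2 * (T * εest) + R := by
      field_simp
    have h5 : T * (B * (costVal H d qbar - l))
        ≤ T * (Cbar * ((H:ℝ)+1) + εbr + 2 * εest + R / T) := by
      rw [hexp]; exact hkey
    have h6 : B * (costVal H d qbar - l) ≤ Cbar * ((H:ℝ)+1) + εbr + 2 * εest + R / T :=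
      le_of_mul_le_mul_left h5 hT0
    have h7 : (costVal H d qbar - l) * B ≤ Cbar * ((H:ℝ)+1) + εbr + 2 * εest + R / T := by
      rw [mul_comm]; exact h6
    have h8 := (le_div_iff₀ hB).mpr h7
    linarith
  -- occupancy-measure approximation
  obtain ⟨Qocc, hQocc⟩ :
      ∃ Q, Q = occMeasure s0 p (fun h s a => qtil h s a / ∑ b : A, qtil h s b) := ⟨_, rfl⟩
  have hoccA := occ_approx H s0 p hp qtil qbar hqbarOcc hpos hsum
  rw [← hQocc] at hoccA ⊢
  -- ‖qtil − qbar‖₁ ≤ εoe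
  have hl1 : l1norm H (fun h s a => qtil h s a - qbar h s a) ≤ εoe := by
    have hpt : ∀ h s a, qtil h s a - qbar h s a
        = (∑ t ∈ Finset.range T, (qhat t h s a - qt t h s a)) / T := by
      intro h s a
      rw [hqtil, hqbar_def]
      simp only
      rw [Finset.sum_sub_distrib, sub_div]
    have step1 : l1norm H (fun h s a => qtil h s a - qbar h s a)
        ≤ ∑ h ∈ Finset.range (H+1), ∑ s : S, ∑ a : A, ∑ t ∈ Finset.range T,
            |qt t h s a - qhat t h s a| / T := by
      simp only [l1norm]
      refine Finset.sum_le_sum fun h _ => Finset.sum_le_sum fun s _ =>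
        Finset.sum_le_sum fun a _ => ?_
      rw [hpt h s a]
      calc |(∑ t ∈ Finset.range T, (qhat t h s a - qt t h s a)) / ↑T|
          = |∑ t ∈ Finset.range T, (qhat t h s a - qt t h s a)| / ↑T := by
            rw [abs_div, abs_of_nonneg hT0.le]
        _ ≤ (∑ t ∈ Finset.range T, |qt t h s a - qhat t h s a|) / ↑T := by
            have : |∑ t ∈ Finset.range T, (qhat t h s a - qt t h s a)|
                ≤ ∑ t ∈ Finset.range T, |qt t h s a - qhat t h s a| := by
              refine le_trans (Finset.abs_sum_le_sum_abs _ _)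
                (le_of_eq (Finset.sum_congr rfl fun t _ => abs_sub_comm _ _))
            exact (div_le_div_iff_of_pos_right hT0).mpr this
        _ = ∑ t ∈ Finset.range T, |qt t h s a - qhat t h s a| / ↑T := Finset.sum_div _ _ _
    have step2 : (∑ h ∈ Finset.range (H+1), ∑ s : S, ∑ a : A, ∑ t ∈ Finset.range T,
          |qt t h s a - qhat t h s a| / T)
        = ∑ t ∈ Finset.range T,
            l1norm H (fun h s a => qt t h s a - qhat t h s a) / T := by
      calc (∑ h ∈ Finset.range (H+1), ∑ s : S, ∑ a : A, ∑ t ∈ Finset.range T,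
            |qt t h s a - qhat t h s a| / (T:ℝ))
          = ∑ h ∈ Finset.range (H+1), ∑ s : S, ∑ t ∈ Finset.range T, ∑ a : A,
            |qt t h s a - qhat t h s a| / (T:ℝ) := by
            refine Finset.sum_congr rfl fun h _ => Finset.sum_congr rfl fun s _ =>
              Finset.sum_comm
        _ = ∑ h ∈ Finset.range (H+1), ∑ t ∈ Finset.range T, ∑ s : S, ∑ a : A,
            |qt t h s a - qhat t h s a| / (T:ℝ) := by
            refine Finset.sum_congr rfl fun h _ => Finset.sum_comm
        _ = ∑ t ∈ Finset.range T, ∑ h ∈ Finset.range (H+1), ∑ s : S, ∑ a : A,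
            |qt t h s a - qhat t h s a| / (T:ℝ) := Finset.sum_comm
        _ = ∑ t ∈ Finset.range T,
            l1norm H (fun h s a => qt t h s a - qhat t h s a) / T := by
            refine Finset.sum_congr rfl fun t _ => ?_
            unfold l1norm
            rw [Finset.sum_div]
            refine Finset.sum_congr rfl fun h _ => ?_
            rw [Finset.sum_div]
            refine Finset.sum_congr rfl fun s _ => ?_
            rw [Finset.sum_div]
    have step3 : (∑ t ∈ Finset.range T,
          l1norm H (fun h s a => qt t h s a - qhat t h s a) / T) ≤ εoe := by
      calc (∑ t ∈ Finset.range T,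
            l1norm H (fun h s a => qt t h s a - qhat t h s a) / T)
          ≤ ∑ _t ∈ Finset.range T, εoe / T := by
            refine Finset.sum_le_sum fun t ht => ?_
            exact (div_le_div_iff_of_pos_right hT0).mpr (hqhat t (Finset.mem_range.mp ht))
        _ = εoe := by
            rw [Finset.sum_const, Finset.card_range, nsmul_eq_mul]
            field_simp
    rw [step2] at step1
    linarith
  -- final cost comparisons
  have hA1 : costVal H d Qocc ≤ costVal H d qtil + Dbar * (2 * ((H:ℝ)+1) * εoe) := by
    have h1 := (abs_le.mp (abs_costVal_sub_le H d Qocc qtil Dbar hdabs)).2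
    have h2 : l1norm H (fun h s a => Qocc h s a - qtil h s a) ≤ 2 * ((H:ℝ)+1) * εoe := by
      refine le_trans hoccA ?_
      have h2a : (0:ℝ) ≤ 2 * ((H:ℝ)+1) := by positivity
      exact mul_le_mul_of_nonneg_left hl1 h2a
    have h3 : Dbar * l1norm H (fun h s a => Qocc h s a - qtil h s a)
        ≤ Dbar * (2 * ((H:ℝ)+1) * εoe) := mul_le_mul_of_nonneg_left h2 hD0
    linarith
  have hA2 : costVal H d qtil ≤ costVal H d qbar + Dbar * εoe := by
    have h1 := (abs_le.mp (abs_costVal_sub_le H d qtil qbar Dbar hdabs)).2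
    have h3 : Dbar * l1norm H (fun h s a => qtil h s a - qbar h s a) ≤ Dbar * εoe :=
      mul_le_mul_of_nonneg_left hl1 hD0
    linarith
  have hA4 : (Cbar * ((H:ℝ)+1) + εbr + 2 * εest + R / T) / B
      ≤ 2 * (Cbar * ((H:ℝ)+1) + εol + εest) / B := by
    have hRT0 : 0 ≤ R / T := div_nonneg hR hT0.le
    have hnum : Cbar * ((H:ℝ)+1) + εbr + 2 * εest + R / T
        ≤ 2 * (Cbar * ((H:ℝ)+1) + εol + εest) := by
      rw [hεol]
      have : (0:ℝ) ≤ Cbar * ((H:ℝ)+1) := by positivity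
      linarith
    exact (div_le_div_iff_of_pos_right hB).mpr hnum
  have hring : Dbar * (2 * ((H:ℝ)+1) * εoe) + Dbar * εoe = Dbar * (2 * (H:ℝ) + 3) * εoe := by
    ring
  linarith [hA1, hA2, hA3, hA4, hring]
end
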